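/- Under the same assumptions (𝐋 = [[z − S, α],[β, z^{-1} − S]] invertible with decaying Green's function G), one has tr G(n+1,n) = −1 for all n, i.e., G₁₁(n+1,n) + G₂₂(n+1,n) = −1. -/

import Mathlib

/-- For the Ablowitz–Ladik Lax operator `𝐋 = [[z − S, α],[β, z⁻¹ − S]]` on
`ℓ²(ℤ) ⊕ ℓ²(ℤ)` with `|z| ≥ 2` and `α, β ∈ ℓ²`, invertible with matrix-valued Green's
function `G(n,m)` decaying as `n → ±∞`, one has `tr G(n+1,n) = −1` for all `n`. -/
theorem AL_greens_function_trace_identity (z : ℂ) (hz : 2 ≤ ‖z‖)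
    (α β : lp (fun _ : ℤ => ℂ) 2)
    (bL bR : (lp (fun _ : ℤ => ℂ) 2 × lp (fun _ : ℤ => ℂ) 2) →L[ℂ]
      (lp (fun _ : ℤ => ℂ) 2 × lp (fun _ : ℤ => ℂ) 2))
    (hL : ∀ (f : lp (fun _ : ℤ => ℂ) 2 × lp (fun _ : ℤ => ℂ) 2) (n : ℤ),
      (bL f).1 n = z * f.1 n - f.1 (n + 1) + α n * f.2 n ∧
      (bL f).2 n = β n * f.1 n + z⁻¹ * f.2 n - f.2 (n + 1))
    (hR1 : bR * bL = 1) (hR2 : bL * bR = 1)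
    (G11 G12 G21 G22 : ℤ → ℤ → ℂ)
    (hG11 : ∀ n m : ℤ, G11 n m = (bR (lp.single 2 m 1, 0)).1 n)
    (hG21 : ∀ n m : ℤ, G21 n m = (bR (lp.single 2 m 1, 0)).2 n)
    (hG12 : ∀ n m : ℤ, G12 n m = (bR (0, lp.single 2 m 1)).1 n)
    (hG22 : ∀ n m : ℤ, G22 n m = (bR (0, lp.single 2 m 1)).2 n)
    (hdecay11 : ∀ m : ℤ, Filter.Tendsto (fun n => G11 n m) Filter.cofinite (nhds 0))
    (hdecay12 : ∀ m : ℤ, Filter.Tendsto (fun n => G12 n m) Filter.cofinite (nhds 0))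
    (hdecay21 : ∀ m : ℤ, Filter.Tendsto (fun n => G21 n m) Filter.cofinite (nhds 0))
    (hdecay22 : ∀ m : ℤ, Filter.Tendsto (fun n => G22 n m) Filter.cofinite (nhds 0)) :
    ∀ n : ℤ, G11 (n + 1) n + G22 (n + 1) n = -1 := by
  have hz0 : z ≠ 0 := by
    intro h; rw [h, norm_zero] at hz; linarith
  have hzz : z * z⁻¹ = 1 := mul_inv_cancel₀ hz0
  have hsing : ∀ (m n : ℤ),
      (lp.single (E := fun _ : ℤ => ℂ) 2 m 1) n = (if n = m then (1:ℂ) else 0) := by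
    intro m n
    rcases eq_or_ne n m with h | h
    · subst h; rw [lp.single_apply_self, if_pos rfl]
    · rw [lp.single_apply_ne _ _ _ h, if_neg h]
  have hLR2 : ∀ x, bL (bR x) = x := by
    intro x
    have := congrArg (fun T => T x) hR2
    simpa [ContinuousLinearMap.mul_apply] using this
  have hLR1 : ∀ x, bR (bL x) = x := by
    intro x
    have := congrArg (fun T => T x) hR1
    simpa [ContinuousLinearMap.mul_apply] using this
  -- ## Column relations
  have hA11 : ∀ a b : ℤ, G11 (a+1) b
      = z * G11 a b + α a * G21 a b - (if a = b then 1 else 0) := by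
    intro a b
    have h := (hL (bR (lp.single 2 b 1, 0)) a).1
    rw [hLR2] at h
    simp only [hsing] at h
    rw [hG11 (a+1) b, hG11 a b, hG21 a b]
    simp only [Pi.zero_apply, lp.coeFn_zero] at h ⊢
    linear_combination h
  have hA21 : ∀ a b : ℤ, G21 (a+1) b = β a * G11 a b + z⁻¹ * G21 a b := by
    intro a b
    have h := (hL (bR (lp.single 2 b 1, 0)) a).2
    rw [hLR2] at h
    simp only [Pi.zero_apply, lp.coeFn_zero] at h
    rw [hG21 (a+1) b, hG11 a b, hG21 a b]
    linear_combination h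
  have hA12 : ∀ a b : ℤ, G12 (a+1) b = z * G12 a b + α a * G22 a b := by
    intro a b
    have h := (hL (bR (0, lp.single 2 b 1)) a).1
    rw [hLR2] at h
    simp only [Pi.zero_apply, lp.coeFn_zero] at h
    rw [hG12 (a+1) b, hG12 a b, hG22 a b]
    linear_combination h
  have hA22 : ∀ a b : ℤ, G22 (a+1) b
      = β a * G12 a b + z⁻¹ * G22 a b - (if a = b then 1 else 0) := by
    intro a b
    have h := (hL (bR (0, lp.single 2 b 1)) a).2
    rw [hLR2] at h
    simp only [hsing] at h
    rw [hG22 (a+1) b, hG12 a b, hG22 a b]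
    simp only [Pi.zero_apply, lp.coeFn_zero] at h ⊢
    linear_combination h
  -- ## Row relations
  have hkey1 : ∀ k : ℤ, bL (lp.single 2 k 1, 0)
      = (z • lp.single 2 k 1 - lp.single 2 (k-1) 1, β k • lp.single 2 k 1) := by
    intro k
    refine Prod.ext ?_ ?_
    · apply lp.ext; funext n
      have h := (hL (lp.single 2 k 1, 0) n).1
      simp only [lp.coeFn_sub, lp.coeFn_smul, Pi.sub_apply, Pi.smul_apply, smul_eq_mul]
      rw [h]
      simp only [hsing, lp.coeFn_zero, Pi.zero_apply, mul_zero, add_zero]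
      rcases eq_or_ne (n+1) k with h1 | h1
      · rw [if_pos h1, if_pos (by omega : n = k - 1)]
      · rw [if_neg h1, if_neg (by omega : ¬ n = k - 1)]
    · apply lp.ext; funext n
      have h := (hL (lp.single 2 k 1, 0) n).2
      simp only [lp.coeFn_smul, Pi.smul_apply, smul_eq_mul]
      rw [h]
      simp only [hsing, lp.coeFn_zero, Pi.zero_apply, mul_zero, add_zero, sub_zero]
      rcases eq_or_ne n k with h1 | h1
      · subst h1; simp
      · simp [if_neg h1]
  have hkey2 : ∀ k : ℤ, bL (0, lp.single 2 k 1)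
      = (α k • lp.single 2 k 1, z⁻¹ • lp.single 2 k 1 - lp.single 2 (k-1) 1) := by
    intro k
    refine Prod.ext ?_ ?_
    · apply lp.ext; funext n
      have h := (hL (0, lp.single 2 k 1) n).1
      simp only [lp.coeFn_smul, Pi.smul_apply, smul_eq_mul]
      rw [h]
      simp only [hsing, lp.coeFn_zero, Pi.zero_apply, mul_zero, zero_sub, sub_zero]
      rcases eq_or_ne n k with h1 | h1
      · subst h1; simp
      · simp [if_neg h1]
    · apply lp.ext; funext n
      have h := (hL (0, lp.single 2 k 1) n).2
      simp only [lp.coeFn_sub, lp.coeFn_smul, Pi.sub_apply, Pi.smul_apply, smul_eq_mul]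
      rw [h]
      simp only [hsing, lp.coeFn_zero, Pi.zero_apply, mul_zero, zero_add, zero_sub, sub_zero]
      rcases eq_or_ne (n+1) k with h1 | h1
      · rw [if_pos h1, if_pos (by omega : n = k - 1)]
      · rw [if_neg h1, if_neg (by omega : ¬ n = k - 1)]
  have hB11 : ∀ a b : ℤ, G11 a (b-1)
      = z * G11 a b + β b * G12 a b - (if a = b then 1 else 0) := by
    intro a b
    have hx : bR (z • lp.single 2 b 1 - lp.single 2 (b-1) 1, β b • lp.single 2 b 1)
        = (lp.single 2 b 1, 0) := by
      rw [← hkey1 b, hLR1]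
    have hdecomp : ((z • lp.single 2 b 1 - lp.single 2 (b-1) 1, β b • lp.single 2 b 1) :
        lp (fun _ : ℤ => ℂ) 2 × lp (fun _ : ℤ => ℂ) 2)
        = z • (lp.single 2 b 1, 0) - (lp.single 2 (b-1) 1, 0) + β b • (0, lp.single 2 b 1) := by
      refine Prod.ext ?_ ?_ <;> simp
    rw [hdecomp, map_add, map_sub, map_smul, map_smul] at hx
    have h1 := congrArg (fun v => (v.1 : ∀ _ : ℤ, ℂ) a) hx
    simp only [Prod.fst_add, Prod.fst_sub, Prod.smul_fst, lp.coeFn_add, lp.coeFn_sub,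
      lp.coeFn_smul, Pi.add_apply, Pi.sub_apply, Pi.smul_apply, smul_eq_mul] at h1
    rw [hsing] at h1
    rw [hG11 a (b-1), hG11 a b, hG12 a b]
    linear_combination -h1
  have hB22 : ∀ a b : ℤ, G22 a (b-1)
      = α b * G21 a b + z⁻¹ * G22 a b - (if a = b then 1 else 0) := by
    intro a b
    have hx : bR (α b • lp.single 2 b 1, z⁻¹ • lp.single 2 b 1 - lp.single 2 (b-1) 1)
        = (0, lp.single 2 b 1) := by
      rw [← hkey2 b, hLR1]
    have hdecomp : ((α b • lp.single 2 b 1, z⁻¹ • lp.single 2 b 1 - lp.single 2 (b-1) 1) :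
        lp (fun _ : ℤ => ℂ) 2 × lp (fun _ : ℤ => ℂ) 2)
        = α b • (lp.single 2 b 1, 0) + z⁻¹ • (0, lp.single 2 b 1) - (0, lp.single 2 (b-1) 1) := by
      refine Prod.ext ?_ ?_ <;> simp
    rw [hdecomp, map_sub, map_add, map_smul, map_smul] at hx
    have h1 := congrArg (fun v => (v.2 : ∀ _ : ℤ, ℂ) a) hx
    simp only [Prod.snd_add, Prod.snd_sub, Prod.smul_snd, lp.coeFn_add, lp.coeFn_sub,
      lp.coeFn_smul, Pi.add_apply, Pi.sub_apply, Pi.smul_apply, smul_eq_mul] at h1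
    rw [hsing] at h1
    rw [hG22 a (b-1), hG21 a b, hG22 a b]
    linear_combination -h1
  -- ## Constancy of the trace
  have hTconst : ∀ n : ℤ, G11 (n+1) n + G22 (n+1) n = G11 (n+2) (n+1) + G22 (n+2) (n+1) := by
    intro n
    have e1 := hB11 (n+1) (n+1)
    have e2 := hB22 (n+1) (n+1)
    have e3 := hA11 (n+1) (n+1)
    have e4 := hA22 (n+1) (n+1)
    rw [if_pos rfl] at e1 e2 e3 e4
    rw [(by ring : n + 1 - 1 = n)] at e1 e2
    rw [(by ring : n + 1 + 1 = n + 2)] at e3 e4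
    linear_combination e1 + e2 - e3 - e4
  -- ## Summability
  have hsum : Summable (fun j : ℤ => ‖α j‖ * ‖β j‖) := by
    have h22 : ((2:ENNReal).toReal).HolderConjugate ((2:ENNReal).toReal) := by
      have : (2:ENNReal).toReal = 2 := by norm_num
      rw [this]
      exact ⟨by norm_num, by norm_num, by norm_num⟩
    exact lp.summable_mul h22 α β
  set T : ℝ := ∑' j : ℤ, ‖α j‖ * ‖β j‖ with hTdef
  have htnonneg : ∀ j : ℤ, 0 ≤ ‖α j‖ * ‖β j‖ := fun j => mul_nonneg (norm_nonneg _) (norm_nonneg _)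
  -- choice of n₀
  obtain ⟨n₀, hn₀⟩ : ∃ n₀ : ℤ, ∀ j : ℤ, n₀ < j → ‖α j‖ * ‖β j‖ ≤ 1/2 := by
    have hev : ∀ᶠ j in Filter.cofinite, ‖α j‖ * ‖β j‖ < 1/2 :=
      hsum.tendsto_cofinite_zero.eventually (gt_mem_nhds (by norm_num))
    have hfin : {j : ℤ | ¬ (‖α j‖ * ‖β j‖ < 1/2)}.Finite := Filter.eventually_cofinite.mp hev
    obtain ⟨b, hb⟩ := hfin.bddAbove
    exact ⟨b, fun j hj => by
      by_contra hcon
      exact absurd (hb (by simpa using (fun h => hcon h.le : ¬ (‖α j‖ * ‖β j‖ < 1/2)))) (by omega)⟩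
  -- determinant
  set D : ℤ → ℤ → ℂ := fun a b => G11 a b * G22 a b - G12 a b * G21 a b with hD
  have hstep : ∀ a b : ℤ, a ≠ b → D (a+1) b = (1 - α a * β a) * D a b := by
    intro a b hab
    simp only [hD]
    rw [hA11, hA21, hA12, hA22, if_neg hab]
    linear_combination (G11 a b * G22 a b - G12 a b * G21 a b) * hzz
  -- left chain
  have hchainL : ∀ b : ℤ, ∀ N : ℕ,
      D b b = (∏ j ∈ Finset.range N, (1 - α (b-1-j) * β (b-1-j))) * D (b - N) b := by
    intro b N
    induction N with
    | zero => simp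
    | succ N ih =>
      have hne : b - 1 - (N:ℤ) ≠ b := by omega
      have hs := hstep (b - 1 - N) b hne
      rw [(by push_cast; ring : b - 1 - (N:ℤ) + 1 = b - N)] at hs
      rw [ih, hs, Finset.prod_range_succ]
      push_cast
      rw [(show b - ((N:ℤ)+1) = b - 1 - N by ring)]
      ring
  -- upper bound on products
  have hub : ∀ (s : Finset ℕ) (g : ℕ → ℤ), (∀ x ∈ s, ∀ y ∈ s, g x = g y → x = y) →
      ‖∏ j ∈ s, (1 - α (g j) * β (g j))‖ ≤ Real.exp T := by
    intro s g hg
    have himg : ∏ j ∈ s.image g, (1 - α j * β j) = ∏ j ∈ s, (1 - α (g j) * β (g j)) :=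
      Finset.prod_image hg
    rw [← himg, norm_prod]
    calc ∏ j ∈ s.image g, ‖1 - α j * β j‖
        ≤ ∏ j ∈ s.image g, Real.exp (‖α j‖ * ‖β j‖) := by
          refine Finset.prod_le_prod (fun j _ => norm_nonneg _) (fun j _ => ?_)
          calc ‖1 - α j * β j‖ ≤ ‖(1:ℂ)‖ + ‖α j * β j‖ := norm_sub_le _ _
            _ = ‖α j‖ * ‖β j‖ + 1 := by rw [norm_one, norm_mul]; ring
            _ ≤ Real.exp (‖α j‖ * ‖β j‖) := Real.add_one_le_exp _
      _ = Real.exp (∑ j ∈ s.image g, ‖α j‖ * ‖β j‖) := by rw [Real.exp_sum]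
      _ ≤ Real.exp T := Real.exp_le_exp.mpr (hsum.sum_le_tsum _ (fun j _ => htnonneg j))
  -- diagonal determinant vanishes
  have hlimL : ∀ b : ℤ, Filter.Tendsto (fun N : ℕ => D (b - N) b) Filter.atTop (nhds 0) := by
    intro b
    have hinj : Function.Injective (fun N : ℕ => b - (N:ℤ)) := by
      intro x y h; simp only at h; omega
    have htend : Filter.Tendsto (fun N : ℕ => b - (N:ℤ)) Filter.atTop Filter.cofinite := by
      rw [← Nat.cofinite_eq_atTop]; exact hinj.tendsto_cofinite
    have h11 := (hdecay11 b).comp htend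
    have h12 := (hdecay12 b).comp htend
    have h21 := (hdecay21 b).comp htend
    have h22 := (hdecay22 b).comp htend
    simp only [hD]
    simpa using (h11.mul h22).sub (h12.mul h21)
  have hDdiag : ∀ b : ℤ, D b b = 0 := by
    intro b
    have hbound : ∀ N : ℕ, ‖D b b‖ ≤ Real.exp T * ‖D (b - N) b‖ := by
      intro N
      rw [hchainL b N, norm_mul]
      have hinj : ∀ x ∈ Finset.range N, ∀ y ∈ Finset.range N,
          b - 1 - (x:ℤ) = b - 1 - (y:ℤ) → x = y := fun x _ y _ h => by omega
      exact mul_le_mul_of_nonneg_right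
        (hub (Finset.range N) (fun j => b - 1 - (j:ℤ)) hinj) (norm_nonneg _)
    have h0 : Filter.Tendsto (fun N : ℕ => Real.exp T * ‖D (b - N) b‖)
        Filter.atTop (nhds 0) := by
      simpa using tendsto_const_nhds.mul ((hlimL b).norm)
    have := ge_of_tendsto' h0 hbound
    exact norm_le_zero_iff.mp this
  -- right chain from n₀
  have hchainR : ∀ N : ℕ,
      D (n₀ + 1 + N) n₀
        = (∏ j ∈ Finset.range N, (1 - α (n₀+1+j) * β (n₀+1+j))) * D (n₀+1) n₀ := by
    intro N
    induction N with
    | zero => simp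
    | succ N ih =>
      have hne : n₀ + 1 + (N:ℤ) ≠ n₀ := by omega
      have hs := hstep (n₀ + 1 + N) n₀ hne
      rw [(by push_cast; ring : n₀ + 1 + (N:ℤ) + 1 = n₀ + 1 + ((N:ℕ)+1:ℕ))] at hs
      rw [hs, ih, Finset.prod_range_succ]
      push_cast
      ring
  -- lower bound on products
  have hlb : ∀ N : ℕ,
      Real.exp (-(2*T)) ≤ ‖∏ j ∈ Finset.range N, (1 - α (n₀+1+j) * β (n₀+1+j))‖ := by
    intro N
    rw [norm_prod]
    have hper : ∀ j ∈ Finset.range N,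
        Real.exp ((-2) * (‖α (n₀+1+(j:ℤ))‖ * ‖β (n₀+1+(j:ℤ))‖))
          ≤ ‖1 - α (n₀+1+(j:ℤ)) * β (n₀+1+(j:ℤ))‖ := by
      intro j _
      set u : ℝ := ‖α (n₀+1+(j:ℤ))‖ * ‖β (n₀+1+(j:ℤ))‖ with hu
      have hu0 : 0 ≤ u := htnonneg _
      have hu2 : u ≤ 1/2 := hn₀ _ (by omega)
      have he := Real.add_one_le_exp (2*u)
      have h3 : 1 ≤ (1 - u) * Real.exp (2*u) := by nlinarith
      have h4 := mul_le_mul_of_nonneg_right h3 (inv_pos.mpr (Real.exp_pos (2*u))).le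
      have hne : Real.exp (2*u) ≠ 0 := (Real.exp_pos _).ne'
      have h5 : Real.exp ((-2)*u) ≤ 1 - u := by
        rw [(by ring : (-2)*u = -(2*u)), Real.exp_neg]
        calc (Real.exp (2*u))⁻¹ = 1 * (Real.exp (2*u))⁻¹ := (one_mul _).symm
          _ ≤ (1-u) * Real.exp (2*u) * (Real.exp (2*u))⁻¹ := h4
          _ = 1 - u := by field_simp
      calc Real.exp ((-2)*u) ≤ 1 - u := h5
        _ ≤ ‖(1:ℂ)‖ - ‖α (n₀+1+(j:ℤ)) * β (n₀+1+(j:ℤ))‖ := by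
            rw [norm_one, norm_mul]
        _ ≤ ‖1 - α (n₀+1+(j:ℤ)) * β (n₀+1+(j:ℤ))‖ := norm_sub_norm_le _ _
    have hsumle : (∑ j ∈ Finset.range N, ‖α (n₀+1+(j:ℤ))‖ * ‖β (n₀+1+(j:ℤ))‖) ≤ T := by
      have hinj2 : ∀ x ∈ Finset.range N, ∀ y ∈ Finset.range N,
          n₀ + 1 + (x:ℤ) = n₀ + 1 + (y:ℤ) → x = y := fun x _ y _ h => by omega
      have himg := Finset.sum_image (s := Finset.range N) (g := fun j : ℕ => n₀+1+(j:ℤ))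
        (f := fun i : ℤ => ‖α i‖ * ‖β i‖) hinj2
      rw [← himg]
      exact hsum.sum_le_tsum _ (fun j _ => htnonneg j)
    calc Real.exp (-(2*T))
        ≤ Real.exp ((-2) * ∑ j ∈ Finset.range N, ‖α (n₀+1+(j:ℤ))‖ * ‖β (n₀+1+(j:ℤ))‖) :=
          Real.exp_le_exp.mpr (by linarith)
      _ = ∏ j ∈ Finset.range N, Real.exp ((-2) * (‖α (n₀+1+(j:ℤ))‖ * ‖β (n₀+1+(j:ℤ))‖)) := by
          rw [← Real.exp_sum, Finset.mul_sum]
      _ ≤ ∏ j ∈ Finset.range N, ‖1 - α (n₀+1+(j:ℤ)) * β (n₀+1+(j:ℤ))‖ :=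
          Finset.prod_le_prod (fun j _ => (Real.exp_pos _).le) hper
  -- off-diagonal determinant vanishes at n₀
  have hE0 : D (n₀+1) n₀ = 0 := by
    have hinj : Function.Injective (fun N : ℕ => n₀ + 1 + (N:ℤ)) := by
      intro x y h; simp only at h; omega
    have htend : Filter.Tendsto (fun N : ℕ => n₀ + 1 + (N:ℤ)) Filter.atTop Filter.cofinite := by
      rw [← Nat.cofinite_eq_atTop]; exact hinj.tendsto_cofinite
    have h11 := (hdecay11 n₀).comp htend
    have h12 := (hdecay12 n₀).comp htend
    have h21 := (hdecay21 n₀).comp htend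
    have h22 := (hdecay22 n₀).comp htend
    have hlimR : Filter.Tendsto (fun N : ℕ => ‖D (n₀+1+N) n₀‖) Filter.atTop (nhds 0) := by
      have : Filter.Tendsto (fun N : ℕ => D (n₀+1+N) n₀) Filter.atTop (nhds 0) := by
        simp only [hD]
        simpa using (h11.mul h22).sub (h12.mul h21)
      simpa using this.norm
    have hbound : ∀ N : ℕ, Real.exp (-(2*T)) * ‖D (n₀+1) n₀‖ ≤ ‖D (n₀+1+N) n₀‖ := by
      intro N
      rw [hchainR N, norm_mul]
      exact mul_le_mul_of_nonneg_right (hlb N) (norm_nonneg _)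
    have hle := ge_of_tendsto' hlimR hbound
    have hx0 : ‖D (n₀+1) n₀‖ = 0 := by
      nlinarith [Real.exp_pos (-(2*T)), norm_nonneg (D (n₀+1) n₀)]
    exact norm_eq_zero.mp hx0
  -- trace at n₀
  have hTn₀ : G11 (n₀+1) n₀ + G22 (n₀+1) n₀ = -1 := by
    have h0 := hDdiag n₀
    have hE := hE0
    simp only [hD] at h0 hE
    have e1 := hA11 n₀ n₀
    have e2 := hA21 n₀ n₀
    have e3 := hA12 n₀ n₀
    have e4 := hA22 n₀ n₀
    rw [if_pos rfl] at e1 e4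
    rw [e1, e2, e3, e4] at hE
    rw [e1, e4]
    linear_combination -hE + (G11 n₀ n₀ * G22 n₀ n₀ - G12 n₀ n₀ * G21 n₀ n₀) * hzz
      + (1 - α n₀ * β n₀) * h0
  -- propagate by constancy
  have hTr : ∀ (n : ℤ) (k : ℕ),
      G11 (n+1) n + G22 (n+1) n = G11 (n+k+1) (n+k) + G22 (n+k+1) (n+k) := by
    intro n k
    induction k with
    | zero => norm_num
    | succ k ih =>
      have ha : n + ((k+1:ℕ):ℤ) + 1 = n + (k:ℤ) + 2 := by push_cast; ring
      have hb : n + ((k+1:ℕ):ℤ) = n + (k:ℤ) + 1 := by push_cast; ring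
      rw [ha, hb, ih, hTconst (n+k)]
  intro n
  rcases le_total n n₀ with hle | hle
  · have hk := hTr n (n₀ - n).toNat
    rw [(by omega : n + ((n₀ - n).toNat : ℤ) = n₀)] at hk
    rw [hk]; exact hTn₀
  · have hk := hTr n₀ (n - n₀).toNat
    rw [(by omega : n₀ + ((n - n₀).toNat : ℤ) = n)] at hk
    rw [← hk]; exact hTn₀
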